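/- Let I be an ideal in a Noetherian ring R. Then the asymptotic Samuel function of the adic filtration {I^m} equals that of the filtration of integral closures {\overline{I^m}}: ν̄_{\{I^m\}} = ν̄_{\{\overline{I^m}\}}. -/

import Mathlib

open Filter Topology Polynomial
open scoped ENNReal

/-- A filtration `I = {I_m}` of ideals of `R`: `I_0 = R`, `I_{n+1} ⊆ I_n`,
and `I_m · I_n ⊆ I_{m+n}`. -/
structure RingFiltration (R : Type*) [CommRing R] where
  I : ℕ → Ideal R
  top_eq : I 0 = ⊤
  antitone_succ : ∀ n, I (n + 1) ≤ I n
  mul_le : ∀ m n, I m * I n ≤ I (m + n)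

namespace RingFiltration
variable {R : Type*} [CommRing R] (F : RingFiltration R)

/-- The order function `ν_I(f) = sup {m : f ∈ I_m}`, viewed in `[0,∞]`. -/
noncomputable def nu (f : R) : ℝ≥0∞ :=
  sSup ((fun m : ℕ => (m : ℝ≥0∞)) '' {m | f ∈ F.I m})

/-- The asymptotic Samuel function `ν̄_I(f) = lim_n ν_I(f^n)/n` (the limit exists and
equals the limsup used here to define it). -/
noncomputable def nubar (f : R) : ℝ≥0∞ :=
  Filter.limsup (fun n : ℕ => F.nu (f ^ n) / (n : ℝ≥0∞)) Filter.atTop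

end RingFiltration

/-- The integral closure of an ideal `J`: the set of `x` satisfying an equation
`x^n + a_1 x^{n-1} + ⋯ + a_n = 0` with `a_i ∈ J^i`. -/
def Ideal.intCl {R : Type*} [CommRing R] (J : Ideal R) : Set R :=
  {x | ∃ n : ℕ, 0 < n ∧ ∃ a : ℕ → R, (∀ i ∈ Finset.Icc 1 n, a i ∈ J ^ i) ∧
    x ^ n + ∑ i ∈ Finset.Icc 1 n, a i * x ^ (n - i) = 0}

/-- The adic filtration `{I^m}` of powers of an ideal. -/
def adicFiltration {R : Type*} [CommRing R] (J : Ideal R) : RingFiltration R where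
  I := fun m => J ^ m
  top_eq := by show J ^ 0 = ⊤; rw [pow_zero, Ideal.one_eq_top]
  antitone_succ := fun n => Ideal.pow_le_pow_right (Nat.le_succ n)
  mul_le := fun m n => (pow_add J m n).ge

/-- Every element of `Q` lies in the integral closure of `Q`. -/
lemma Ideal.subset_intCl {R : Type*} [CommRing R] (Q : Ideal R) : (Q : Set R) ⊆ Q.intCl := by
  intro x hx
  refine ⟨1, one_pos, fun _ => -x, ?_, ?_⟩
  · intro i hi
    rw [Finset.mem_Icc] at hi
    have : i = 1 := by omega
    subst this
    rw [pow_one]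
    exact neg_mem hx
  · simp

/-- If `x` is integral over `Q` (of degree `d`), then `x ^ k ∈ Q ^ (k - d + 1)` for `k ≥ d`. -/
lemma Ideal.intCl_pow_mem {R : Type*} [CommRing R] {Q : Ideal R} {x : R}
    (hx : x ∈ Q.intCl) : ∃ d : ℕ, 0 < d ∧ ∀ k, d ≤ k → x ^ k ∈ Q ^ (k - d + 1) := by
  obtain ⟨d, hd, a, ha, heq⟩ := hx
  refine ⟨d, hd, ?_⟩
  set S : ℕ → Ideal R := fun k => ⨆ j ∈ Finset.range d, Q ^ (k - j) * Ideal.span {x ^ j}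
    with hS
  have hbase : x ^ d ∈ S d := by
    have hxe : x ^ d = -∑ i ∈ Finset.Icc 1 d, a i * x ^ (d - i) :=
      eq_neg_of_add_eq_zero_left heq
    rw [hxe]
    refine neg_mem (Ideal.sum_mem _ fun i hi => ?_)
    have hi' := Finset.mem_Icc.mp hi
    refine SetLike.le_def.mp
      (le_iSup₂_of_le (d - i) (Finset.mem_range.mpr (by omega)) le_rfl) ?_
    have hji : d - (d - i) = i := by omega
    rw [hji]
    exact Ideal.mul_mem_mul (ha i hi) (Ideal.subset_span rfl)
  have hstep : ∀ k, d ≤ k → x ^ k ∈ S k := by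
    intro k hk
    induction k, hk using Nat.le_induction with
    | base => exact hbase
    | succ k hk ih =>
      have hxk : x ^ (k + 1) ∈ Ideal.span {x} * S k := by
        rw [pow_succ']
        exact Ideal.mul_mem_mul (Ideal.subset_span rfl) ih
      refine SetLike.le_def.mp ?_ hxk
      simp only [hS]
      rw [Submodule.mul_iSup]
      refine iSup_le fun j => ?_
      rw [Submodule.mul_iSup]
      refine iSup_le fun hj => ?_
      have hj' := Finset.mem_range.mp hj
      have hterm : Ideal.span {x} * (Q ^ (k - j) * Ideal.span {x ^ j})
          = Q ^ (k - j) * Ideal.span {x ^ (j + 1)} := by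
        rw [mul_comm (Ideal.span {x}), mul_assoc, Ideal.span_singleton_mul_span_singleton,
          ← pow_succ]
      rw [hterm]
      by_cases hjd : j + 1 < d
      · have he : k - j = k + 1 - (j + 1) := by omega
        rw [he]
        exact le_iSup₂_of_le (j + 1) (Finset.mem_range.mpr hjd) le_rfl
      · have hjd' : j + 1 = d := by omega
        have hsp : Ideal.span {x ^ (j + 1)} ≤ S d := by
          rw [Ideal.span_le]
          intro y hy
          rw [Set.mem_singleton_iff] at hy
          subst hy
          rw [hjd']
          exact hbase
        calc Q ^ (k - j) * Ideal.span {x ^ (j + 1)} ≤ Q ^ (k - j) * S d :=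
              Ideal.mul_mono_right hsp
          _ ≤ S (k + 1) := by
              simp only [hS]
              rw [Submodule.mul_iSup]
              refine iSup_le fun j' => ?_
              rw [Submodule.mul_iSup]
              refine iSup_le fun hj'' => ?_
              have hj''' := Finset.mem_range.mp hj''
              rw [← mul_assoc, ← pow_add]
              have he : k - j + (d - j') = k + 1 - j' := by omega
              rw [he]
              exact le_iSup₂_of_le j' hj'' le_rfl
  intro k hk
  have h1 : S k ≤ Q ^ (k - d + 1) := by
    simp only [hS]
    refine iSup_le fun j => iSup_le fun hj => ?_
    have hj' := Finset.mem_range.mp hj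
    exact le_trans Ideal.mul_le_left (Ideal.pow_le_pow_right (by omega))
  exact h1 (hstep k hk)

/-- For an ideal `I` of a Noetherian ring `R`, the asymptotic Samuel function of the adic
filtration `{I^m}` equals that of the filtration of integral closures `{\bar{I^m}}`. -/
theorem nubar_adic_eq_nubar_intCl {R : Type*} [CommRing R] [IsNoetherianRing R]
    (J : Ideal R) (G : RingFiltration R)
    (hG : ∀ m, (G.I m : Set R) = Ideal.intCl (J ^ m)) (x : R) :
    (adicFiltration J).nubar x = G.nubar x := by
  apply le_antisymm
  · -- easy direction: `J^m ⊆ \bar{J^m}`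
    refine Filter.limsup_le_limsup (Eventually.of_forall fun n => ?_)
    apply ENNReal.div_le_div_right
    refine sSup_le_sSup (Set.image_mono fun m hm => ?_)
    simp only [Set.mem_setOf_eq] at hm ⊢
    rw [← SetLike.mem_coe, hG m]
    exact Ideal.subset_intCl _ hm
  · set A := (adicFiltration J).nubar x with hA
    refine Filter.limsup_le_of_le (by isBoundedDefault) ?_
    filter_upwards [Filter.eventually_ge_atTop 1] with n hn
    have hn0 : (n : ℝ≥0∞) ≠ 0 := Nat.cast_ne_zero.mpr (by omega)
    refine ENNReal.div_le_of_le_mul ?_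
    refine sSup_le ?_
    rintro y ⟨m, hm, rfl⟩
    simp only [Set.mem_setOf_eq] at hm
    -- `x ^ n` is integral over `J ^ m`
    rw [← SetLike.mem_coe, hG m] at hm
    obtain ⟨d, hd, hpow⟩ := Ideal.intCl_pow_mem hm
    -- it suffices to show `(m : ℝ≥0∞) / n ≤ A`
    have key : (m : ℝ≥0∞) / n ≤ A := by
      refine le_of_forall_lt fun b hb => ?_
      obtain ⟨c, hbc, hcm⟩ := exists_between hb
      refine lt_of_lt_of_le hbc ?_
      -- show `c ≤ A` using the subsequence `x ^ (n * k)`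
      have hmn_top : (m : ℝ≥0∞) / n ≠ ⊤ := (ENNReal.div_lt_top (by simp) hn0).ne
      have hc_top : c ≠ ⊤ := (lt_of_lt_of_le hcm le_top).ne
      have hcn : c * n < m :=
        (ENNReal.lt_div_iff_mul_lt (Or.inl hn0) (Or.inl (ENNReal.natCast_ne_top n))).mp hcm
      set ε : ℝ≥0∞ := (m : ℝ≥0∞) - c * n with hε
      have hε0 : ε ≠ 0 := by
        rw [hε]
        exact (tsub_pos_of_lt hcn).ne'
      have hεm : c * n + ε = m := add_tsub_cancel_of_le hcn.le
      obtain ⟨K, hK⟩ := ENNReal.exists_nat_gt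
        (r := ((m * (d - 1) : ℕ) : ℝ≥0∞) / ε) (ENNReal.div_lt_top (ENNReal.natCast_ne_top _) hε0).ne
      refine Filter.le_limsup_of_frequently_le' ?_
      rw [Filter.frequently_atTop]
      intro N
      set k : ℕ := max d (max K N) with hk
      have hkd : d ≤ k := le_max_left _ _
      have hkN : N ≤ k := le_trans (le_max_right K N) (le_max_right d _)
      have hkK : (K : ℝ≥0∞) ≤ k := by
        exact_mod_cast le_trans (le_max_left K N) (le_max_right d _)
      refine ⟨n * k, le_trans hkN (Nat.le_mul_of_pos_left k hn), ?_⟩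
      -- lower bound for `nu` at `x ^ (n * k)`
      have hmem : x ^ (n * k) ∈ (adicFiltration J).I (m * (k - d + 1)) := by
        show x ^ (n * k) ∈ J ^ (m * (k - d + 1))
        rw [pow_mul x n k, pow_mul J m (k - d + 1)]
        exact hpow k hkd
      have hnu : ((m * (k - d + 1) : ℕ) : ℝ≥0∞) ≤ (adicFiltration J).nu (x ^ (n * k)) :=
        le_sSup ⟨m * (k - d + 1), hmem, rfl⟩
      -- the numeric estimate `c * (n * k) < m * (k - d + 1)`
      have hεk : ((m * (d - 1) : ℕ) : ℝ≥0∞) < ε * k := by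
        rw [mul_comm ε]
        exact (ENNReal.div_lt_iff (Or.inl hε0)
          (Or.inr (ENNReal.natCast_ne_top _))).mp (lt_of_lt_of_le hK hkK)
      have hnat : m * k = m * (k - d + 1) + m * (d - 1) := by
        have : k - d + 1 + (d - 1) = k := by omega
        calc m * k = m * ((k - d + 1) + (d - 1)) := by rw [this]
          _ = m * (k - d + 1) + m * (d - 1) := by ring
      have hcnk : c * (n * k : ℕ) < ((m * (k - d + 1) : ℕ) : ℝ≥0∞) := by
        have h1 : c * (n * k : ℕ) + ε * k = (m : ℝ≥0∞) * k := by
          push_cast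
          rw [← mul_assoc, ← add_mul, hεm]
        have h2 : ((m * (k - d + 1) : ℕ) : ℝ≥0∞) + ((m * (d - 1) : ℕ) : ℝ≥0∞)
            = (m : ℝ≥0∞) * k := by
          rw [← Nat.cast_add, ← hnat]
          push_cast
          ring
        have h3 : c * (n * k : ℕ) + ((m * (d - 1) : ℕ) : ℝ≥0∞)
            < c * (n * k : ℕ) + ε * k := by
          refine ENNReal.add_lt_add_left ?_ hεk
          exact ENNReal.mul_ne_top hc_top (ENNReal.natCast_ne_top _)
        rw [h1, ← h2] at h3
        exact lt_of_add_lt_add_right h3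
      -- conclude `c ≤ nu / (n * k)`
      have hnk0 : ((n * k : ℕ) : ℝ≥0∞) ≠ 0 := by
        have : 0 < n * k := Nat.mul_pos hn (lt_of_lt_of_le hd hkd)
        exact_mod_cast this.ne'
      rw [ENNReal.le_div_iff_mul_le (Or.inl hnk0) (Or.inl (by simp [ENNReal.mul_eq_top]))]
      exact le_trans (le_of_lt hcnk) hnu
    calc (m : ℝ≥0∞) = (m : ℝ≥0∞) / n * n :=
          (ENNReal.div_mul_cancel hn0 (ENNReal.natCast_ne_top n)).symm
      _ ≤ A * n := mul_le_mul_left key _
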